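/- Let q ≥ 1, let ξ ∈ L¹(ℝ^q) be measurable, let n ≥ 1 be a natural number, and let g ∈ L¹(ℝ^q). Define the sampling Kantorovich operator S_n(g)(x) = n^q ∑_{k ∈ ℤ^q} ξ(n x − k) ∫_{D_k^n} g(u) du, where D_k^n = ∏_{j=1}^{q} [k_j/n, (k_j+1)/n). Then S_n(g) ∈ L¹(ℝ^q) and ‖S_n(g)‖_{L¹(ℝ^q)} ≤ ‖ξ‖_{L¹(ℝ^q)} ‖g‖_{L¹(ℝ^q)}; in particular the constant L = ‖ξ‖_{L¹} depends only on the kernel ξ and not on n or g. -/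

import Mathlib

open MeasureTheory

/-- The cell `D_k^n = ∏_{j=1}^q [k_j/n, (k_j+1)/n)` of the uniform grid of step `1/n`. -/
def cell (q n : ℕ) (k : Fin q → ℤ) : Set (EuclideanSpace ℝ (Fin q)) :=
  WithLp.ofLp ⁻¹' Set.univ.pi fun j => Set.Ico ((k j : ℝ) / n) (((k j : ℝ) + 1) / n)

/-- The sampling Kantorovich operator
`S_n(f)(x) = n^q ∑_{k ∈ ℤ^q} ξ(n x − k) ∫_{D_k^n} f(u) du`. -/
noncomputable def SK (q : ℕ) (ξ : EuclideanSpace ℝ (Fin q) → ℝ) (n : ℕ)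
    (f : EuclideanSpace ℝ (Fin q) → ℝ) (x : EuclideanSpace ℝ (Fin q)) : ℝ :=
  (n : ℝ) ^ q * ∑' k : Fin q → ℤ,
    ξ (WithLp.toLp 2 fun j => (n : ℝ) * x j - (k j : ℝ)) * ∫ u in cell q n k, f u

/-- The grid point `k/n ∈ ℝ^q`, as an element of Euclidean space. -/
noncomputable def vv (q : ℕ) (k : Fin q → ℤ) : EuclideanSpace ℝ (Fin q) := WithLp.toLp 2 fun j => (k j : ℝ)

theorem mem_cell_iff (q n : ℕ) (hn : 1 ≤ n) (x : EuclideanSpace ℝ (Fin q)) (k : Fin q → ℤ) :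
    x ∈ cell q n k ↔ ∀ j, ⌊(n:ℝ) * x j⌋ = k j := by
  have hn0 : (0:ℝ) < n := by exact_mod_cast hn
  simp only [cell, Set.mem_preimage, Set.mem_pi, Set.mem_univ, true_implies, Set.mem_Ico]
  refine forall_congr' fun j => ?_
  rw [div_le_iff₀ hn0, lt_div_iff₀ hn0, Int.floor_eq_iff]
  constructor
  · rintro ⟨h1, h2⟩
    refine ⟨by linarith [mul_comm ((k j:ℝ)) (n:ℝ)], by linarith⟩
  · rintro ⟨h1, h2⟩
    exact ⟨by linarith, by linarith⟩

/-- Integrability of an unconditional sum with summable `L¹` norms, together with the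
triangle inequality for the integral of the sum. -/
theorem integrable_tsum_aux {α : Type*} [MeasurableSpace α] {μ : Measure α}
    {ι : Type*} [Countable ι] {F : ι → α → ℝ}
    (hF : ∀ i, Integrable (F i) μ) (hs : Summable fun i => ∫ a, ‖F i a‖ ∂μ) :
    Integrable (fun a => ∑' i, F i a) μ ∧
      ∫ a, ‖∑' i, F i a‖ ∂μ ≤ ∑' i, ∫ a, ‖F i a‖ ∂μ := by
  have hmeas_i : ∀ i, AEMeasurable (fun a => (‖F i a‖₊ : ENNReal)) μ :=
    fun i => (hF i).1.aemeasurable.nnnorm.coe_nnreal_ennreal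
  have h1 : ∀ i, ∫⁻ a, ‖F i a‖₊ ∂μ = ENNReal.ofReal (∫ a, ‖F i a‖ ∂μ) := fun i =>
    (ofReal_integral_norm_eq_lintegral_enorm (hF i)).symm
  have hnonneg : ∀ i, 0 ≤ ∫ a, ‖F i a‖ ∂μ := fun i => integral_nonneg fun a => norm_nonneg _
  have hlint : ∑' i, ∫⁻ a, ‖F i a‖₊ ∂μ ≠ ⊤ := by
    have : ∑' i, ∫⁻ a, ‖F i a‖₊ ∂μ = ENNReal.ofReal (∑' i, ∫ a, ‖F i a‖ ∂μ) := by
      rw [ENNReal.ofReal_tsum_of_nonneg hnonneg hs]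
      exact tsum_congr h1
    rw [this]
    exact ENNReal.ofReal_ne_top
  have hGlint : ∫⁻ a, ∑' i, (‖F i a‖₊ : ENNReal) ∂μ ≠ ⊤ := by
    rw [lintegral_tsum hmeas_i]; exact hlint
  have hae : ∀ᵐ a ∂μ, Summable fun i => ‖F i a‖ := by
    refine (ae_lt_top' (AEMeasurable.ennreal_tsum hmeas_i) hGlint).mono fun a ha => ?_
    have := ENNReal.tsum_coe_ne_top_iff_summable_coe.1 ha.ne
    simpa [coe_nnnorm] using this
  have hpt : ∀ a, (‖∑' i, F i a‖₊ : ENNReal) ≤ ∑' i, (‖F i a‖₊ : ENNReal) := by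
    intro a
    by_cases hsa : Summable fun i => ‖F i a‖₊
    · calc (‖∑' i, F i a‖₊ : ENNReal) ≤ ((∑' i, ‖F i a‖₊ : NNReal) : ENNReal) := by
            exact_mod_cast nnnorm_tsum_le hsa
        _ = ∑' i, (‖F i a‖₊ : ENNReal) := ENNReal.coe_tsum hsa
    · have : ¬ Summable fun i => F i a := by
        intro h
        exact hsa (by simpa [← NNReal.summable_coe, coe_nnnorm] using h.abs)
      rw [tsum_eq_zero_of_not_summable this]
      simp
  have hsm : AEStronglyMeasurable (fun a => ∑' i, F i a) μ := by
    refine aestronglyMeasurable_of_tendsto_ae (Filter.atTop : Filter (Finset ι))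
      (fun s => s.aestronglyMeasurable_sum fun i _ => (hF i).1) ?_
    filter_upwards [hae] with a ha
    simp only [Finset.sum_apply]
    exact ha.of_norm.hasSum
  have hint : Integrable (fun a => ∑' i, F i a) μ := by
    refine ⟨hsm, ?_⟩
    rw [HasFiniteIntegral]
    exact lt_of_le_of_lt (lintegral_mono hpt) hGlint.lt_top
  refine ⟨hint, ?_⟩
  have h2 : ∫ a, ‖∑' i, F i a‖ ∂μ = (∫⁻ a, ‖∑' i, F i a‖₊ ∂μ).toReal :=
    integral_norm_eq_lintegral_enorm hsm
  rw [h2]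
  have h3 : (∫⁻ a, ‖∑' i, F i a‖₊ ∂μ) ≤ ENNReal.ofReal (∑' i, ∫ a, ‖F i a‖ ∂μ) := by
    refine le_trans (lintegral_mono hpt) ?_
    rw [lintegral_tsum hmeas_i, ENNReal.ofReal_tsum_of_nonneg hnonneg hs]
    exact le_of_eq (tsum_congr h1)
  calc (∫⁻ a, ‖∑' i, F i a‖₊ ∂μ).toReal
      ≤ (ENNReal.ofReal (∑' i, ∫ a, ‖F i a‖ ∂μ)).toReal :=
        ENNReal.toReal_mono ENNReal.ofReal_ne_top h3
    _ = ∑' i, ∫ a, ‖F i a‖ ∂μ := ENNReal.toReal_ofReal (tsum_nonneg hnonneg)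

/-- `S_n(g) ∈ L¹(ℝ^q)` with `‖S_n(g)‖₁ ≤ ‖ξ‖₁ ‖g‖₁`, the constant `‖ξ‖₁`
depending only on the kernel. -/
theorem SK_L1_bound (q : ℕ) (hq : 1 ≤ q)
    (ξ : EuclideanSpace ℝ (Fin q) → ℝ) (hmeas : Measurable ξ) (hξ : Integrable ξ)
    (n : ℕ) (hn : 1 ≤ n)
    (g : EuclideanSpace ℝ (Fin q) → ℝ) (hg : Integrable g) :
    Integrable (SK q ξ n g) ∧
      (∫ x : EuclideanSpace ℝ (Fin q), |SK q ξ n g x|)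
        ≤ (∫ x : EuclideanSpace ℝ (Fin q), |ξ x|)
            * ∫ x : EuclideanSpace ℝ (Fin q), |g x| := by
  have hn0 : (0:ℝ) < n := by exact_mod_cast hn
  have hnne : (n:ℝ) ≠ 0 := ne_of_gt hn0
  have hnq0 : (0:ℝ) < (n:ℝ) ^ q := pow_pos hn0 q
  set c : (Fin q → ℤ) → ℝ := fun k => ∫ u in cell q n k, g u with hc
  set F : (Fin q → ℤ) → EuclideanSpace ℝ (Fin q) → ℝ :=
    fun k x => ξ ((n:ℝ) • x - vv q k) * c k with hF
  have hSK : SK q ξ n g = fun x => (n:ℝ) ^ q * ∑' k, F k x := by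
    funext x
    simp only [SK, hF, hc]
    congr 1
  -- integrability of each summand
  have hIk : ∀ k, Integrable (F k) := by
    intro k
    exact ((hξ.comp_sub_right (vv q k)).comp_smul hnne).mul_const _
  -- the L¹ norm of each summand
  have hval : ∀ k, ∫ x, ‖F k x‖ = ((n:ℝ) ^ q)⁻¹ * (∫ y, ‖ξ y‖) * ‖c k‖ := by
    intro k
    have h1 : (fun x => ‖F k x‖)
        = fun x => (fun y => ‖ξ (y - vv q k)‖) ((n:ℝ) • x) * ‖c k‖ := by
      funext x; simp [hF, norm_mul]
    rw [h1, integral_mul_const, Measure.integral_comp_smul volume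
      (fun y => ‖ξ (y - vv q k)‖) (n:ℝ)]
    rw [integral_sub_right_eq_self (fun y => ‖ξ y‖) (vv q k)]
    have : Module.finrank ℝ (EuclideanSpace ℝ (Fin q)) = q := by simp
    rw [this, abs_of_nonneg (by positivity : (0:ℝ) ≤ ((n:ℝ) ^ q)⁻¹)]
    simp [smul_eq_mul, mul_assoc]
  -- the cells are a measurable partition of ℝ^q
  have hm : ∀ k, MeasurableSet (cell q n k) :=
    fun k => (MeasurableSet.univ_pi fun j => measurableSet_Ico).preimage (WithLp.measurable_ofLp _ _)
  have hd : Pairwise (Function.onFun Disjoint (cell q n)) := by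
    intro k k' hkk'
    rw [Function.onFun, Set.disjoint_left]
    intro x hx hx'
    exact hkk' (funext fun j =>
      ((mem_cell_iff q n hn x k).1 hx j).symm.trans ((mem_cell_iff q n hn x k').1 hx' j))
  have hU : (⋃ k, cell q n k) = Set.univ := by
    ext x
    simp only [Set.mem_iUnion, Set.mem_univ, iff_true]
    exact ⟨fun j => ⌊(n:ℝ) * x j⌋, (mem_cell_iff q n hn x _).2 fun j => rfl⟩
  have hcellSum : HasSum (fun k => ∫ x in cell q n k, ‖g x‖) (∫ x, ‖g x‖) := by
    have := hasSum_integral_iUnion (μ := volume) (f := fun x => ‖g x‖) hm hd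
      (by rw [hU]; exact hg.norm.integrableOn)
    rwa [hU, Measure.restrict_univ] at this
  have hck : ∀ k, ‖c k‖ ≤ ∫ x in cell q n k, ‖g x‖ := fun k =>
    norm_integral_le_integral_norm _
  have hCpos : (0:ℝ) ≤ ((n:ℝ) ^ q)⁻¹ * (∫ y, ‖ξ y‖) := by
    have : (0:ℝ) ≤ ∫ y, ‖ξ y‖ := integral_nonneg fun y => norm_nonneg _
    positivity
  -- summability of the L¹ norms
  have hsum : Summable fun k => ∫ x, ‖F k x‖ := by
    refine Summable.of_nonneg_of_le (fun k => integral_nonneg fun x => norm_nonneg _)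
      (fun k => ?_) (hcellSum.summable.mul_left (((n:ℝ) ^ q)⁻¹ * (∫ y, ‖ξ y‖)))
    rw [hval k]
    exact mul_le_mul_of_nonneg_left (hck k) hCpos
  obtain ⟨hint, hbnd⟩ := integrable_tsum_aux hIk hsum
  constructor
  · rw [hSK]
    exact hint.const_mul _
  · have habs : ∀ x, |SK q ξ n g x| = (n:ℝ) ^ q * ‖∑' k, F k x‖ := by
      intro x
      rw [hSK]
      rw [Real.norm_eq_abs, abs_mul, abs_of_nonneg hnq0.le]
    calc (∫ x, |SK q ξ n g x|)
        = (n:ℝ) ^ q * ∫ x, ‖∑' k, F k x‖ := by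
          simp_rw [habs]; exact integral_const_mul _ _
      _ ≤ (n:ℝ) ^ q * ∑' k, ∫ x, ‖F k x‖ := by
          exact mul_le_mul_of_nonneg_left hbnd hnq0.le
      _ = (n:ℝ) ^ q * (((n:ℝ) ^ q)⁻¹ * (∫ y, ‖ξ y‖) * ∑' k, ‖c k‖) := by
          rw [tsum_congr hval, tsum_mul_left]
      _ ≤ (n:ℝ) ^ q * (((n:ℝ) ^ q)⁻¹ * (∫ y, ‖ξ y‖) * ∫ x, ‖g x‖) := by
          refine mul_le_mul_of_nonneg_left (mul_le_mul_of_nonneg_left ?_ hCpos) hnq0.le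
          have hsumc : Summable fun k => ‖c k‖ :=
            Summable.of_nonneg_of_le (fun k => norm_nonneg _) hck hcellSum.summable
          calc ∑' k, ‖c k‖ ≤ ∑' k, ∫ x in cell q n k, ‖g x‖ :=
                Summable.tsum_le_tsum hck hsumc hcellSum.summable
            _ = ∫ x, ‖g x‖ := hcellSum.tsum_eq
      _ = (∫ x, |ξ x|) * ∫ x, |g x| := by
          simp_rw [Real.norm_eq_abs]
          rw [← mul_assoc, ← mul_assoc, mul_inv_cancel₀ (ne_of_gt hnq0), one_mul]
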